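/- The Thue–Morse word contains no cube: there is no nonempty word u such that uuu is a factor of t. -/

import Mathlib

/-- The Thue–Morse word: bit `n` is the parity of the number of 1s in the
binary expansion of `n`. -/
def tm (n : ℕ) : Fin 2 := (Fin.ofNat 2 (Nat.digits 2 n).sum : Fin 2)

/-- A finite word `u` is a factor of the infinite word `w` if it occurs as a
contiguous subword of `w`. -/
def IsFactorOf {α : Type*} (u : List α) (w : ℕ → α) : Prop :=
  ∃ i : ℕ, u = (List.range u.length).map (fun j => w (i + j))

lemma fin2_aa (x : Fin 2) : x + 1 + 1 = x := by fin_cases x <;> decide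

lemma fin2_ne (x : Fin 2) : x + 1 ≠ x := by fin_cases x <;> decide

lemma tm_even (a : ℕ) : tm (2 * a) = tm a := by
  rcases Nat.eq_zero_or_pos a with rfl | ha
  · rfl
  · unfold tm
    rw [Nat.digits_def' (by norm_num : (1:ℕ) < 2) (by omega)]
    simp [Nat.mul_div_cancel_left, Nat.mul_mod_right]

lemma tm_odd (a : ℕ) : tm (2 * a + 1) = tm a + 1 := by
  unfold tm
  rw [Nat.digits_def' (by norm_num : (1:ℕ) < 2) (by omega)]
  have h1 : (2 * a + 1) % 2 = 1 := by omega
  have h2 : (2 * a + 1) / 2 = a := by omega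
  rw [h1, h2]
  push_cast [List.sum_cons]
  rw [Fin.ext_iff, Fin.val_add, Fin.val_ofNat, Fin.val_ofNat]
  simp only [Fin.val_one]
  omega

lemma tm_no_three (b : ℕ) (h1 : tm b = tm (b+1)) (h2 : tm (b+1) = tm (b+2)) : False := by
  rcases Nat.even_or_odd b with ⟨a, hb⟩ | ⟨a, hb⟩
  · have e1 : b = 2 * a := by omega
    have e2 : b + 1 = 2 * a + 1 := by omega
    rw [e1, tm_even, tm_odd] at h1
    exact fin2_ne (tm a) h1.symm
  · have e1 : b + 1 = 2 * (a+1) := by omega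
    have e2 : b + 2 = 2 * (a+1) + 1 := by omega
    rw [e1, e2, tm_even, tm_odd] at h2
    exact fin2_ne (tm (a+1)) h2.symm

lemma tm_no_cube : ∀ n, 0 < n → ∀ i, ¬ (∀ j < 2*n, tm (i+j) = tm (i+n+j)) := by
  intro n
  induction n using Nat.strong_induction_on with
  | _ n ih =>
    intro hn i h
    rcases Nat.even_or_odd n with ⟨m, hnm⟩ | ⟨c, hnc⟩
    · -- even case: n = 2m
      have hm : 0 < m := by omega
      rcases Nat.even_or_odd i with ⟨b, hib⟩ | ⟨b, hib⟩
      · refine ih m (by omega) hm b (fun j hj => ?_)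
        have hh := h (2*j) (by omega)
        have e1 : i + 2*j = 2*(b+j) := by omega
        have e2 : i + n + 2*j = 2*(b+m+j) := by omega
        rw [e1, e2, tm_even, tm_even] at hh
        exact hh
      · refine ih m (by omega) hm (b+1) (fun j hj => ?_)
        have hh := h (2*j+1) (by omega)
        have e1 : i + (2*j+1) = 2*(b+1+j) := by omega
        have e2 : i + n + (2*j+1) = 2*(b+1+m+j) := by omega
        rw [e1, e2, tm_even, tm_even] at hh
        exact hh
    · -- odd case: n = 2c+1
      by_cases hc : c = 0
      · -- n = 1
        have h0 := h 0 (by omega)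
        have h1 := h 1 (by omega)
        have e0 : i + 0 = i := by omega
        have e1 : i + n + 0 = i + 1 := by omega
        have e2 : i + n + 1 = i + 2 := by omega
        rw [e0, e1] at h0
        rw [e2] at h1
        exact tm_no_three i h0 h1
      · have hc1 : 1 ≤ c := by omega
        rcases Nat.even_or_odd i with ⟨b, hib⟩ | ⟨b, hib⟩
        · -- i = 2b, use j = 0,1,2,3
          have h0 := h 0 (by omega)
          have h1 := h 1 (by omega)
          have h2 := h 2 (by omega)
          have h3 := h 3 (by omega)
          have e0 : i + 0 = 2 * b := by omega
          have e0' : i + n + 0 = 2 * (b+c) + 1 := by omega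
          have e1 : i + 1 = 2 * b + 1 := by omega
          have e1' : i + n + 1 = 2 * (b+c+1) := by omega
          have e2 : i + 2 = 2 * (b+1) := by omega
          have e2' : i + n + 2 = 2 * (b+c+1) + 1 := by omega
          have e3 : i + 3 = 2 * (b+1) + 1 := by omega
          have e3' : i + n + 3 = 2 * (b+c+2) := by omega
          rw [e0, e0', tm_even, tm_odd] at h0
          rw [e1, e1', tm_odd, tm_even] at h1
          rw [e2, e2', tm_even, tm_odd] at h2
          rw [e3, e3', tm_odd, tm_even] at h3
          refine tm_no_three (b+c) ?_ ?_
          · rw [show b+c+1 = (b+c)+1 from rfl] at h1 ⊢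
            rw [← h1, h0]; exact (fin2_aa _).symm
          · have : b+c+2 = (b+c+1)+1 := by omega
            rw [this] at h3
            rw [← h3, h2]; exact (fin2_aa _).symm
        · -- i = 2b+1, use j = 1,2,3,4 with base b+1
          have h0 := h 1 (by omega)
          have h1 := h 2 (by omega)
          have h2 := h 3 (by omega)
          have h3 := h 4 (by omega)
          have e0 : i + 1 = 2 * (b+1) := by omega
          have e0' : i + n + 1 = 2 * (b+1+c) + 1 := by omega
          have e1 : i + 2 = 2 * (b+1) + 1 := by omega
          have e1' : i + n + 2 = 2 * (b+1+c+1) := by omega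
          have e2 : i + 3 = 2 * (b+2) := by omega
          have e2' : i + n + 3 = 2 * (b+1+c+1) + 1 := by omega
          have e3 : i + 4 = 2 * (b+2) + 1 := by omega
          have e3' : i + n + 4 = 2 * (b+1+c+2) := by omega
          rw [e0, e0', tm_even, tm_odd] at h0
          rw [e1, e1', tm_odd, tm_even] at h1
          rw [e2, e2', tm_even, tm_odd] at h2
          rw [e3, e3', tm_odd, tm_even] at h3
          refine tm_no_three (b+1+c) ?_ ?_
          · rw [← h1, h0]; exact (fin2_aa _).symm
          · have : b+1+c+2 = (b+1+c+1)+1 := by omega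
            rw [this] at h3
            rw [← h3, h2]; exact (fin2_aa _).symm

theorem stmt_7 (u : List (Fin 2)) (hu : u ≠ []) :
    ¬ IsFactorOf (u ++ u ++ u) tm := by
  rintro ⟨i, heq⟩
  set n := u.length with hn
  have hn1 : 0 < n := List.length_pos_iff.mpr hu
  have hlen : (u ++ u ++ u).length = 3 * n := by (try simp only [List.length_append]); omega
  -- element of the triple word
  have hel : ∀ m, m < 3 * n → (u ++ u ++ u)[m]? = some (tm (i + m)) := by
    intro m hm
    conv_lhs => rw [heq]
    rw [List.getElem?_map, List.getElem?_range (by rw [hlen]; exact hm)]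
    rfl
  have hA : ∀ k, k < n → u[k]? = some (tm (i + k)) := by
    intro k hk
    have := hel k (by omega)
    rwa [List.getElem?_append_left (by (try simp only [List.length_append]); omega),
      List.getElem?_append_left (by omega)] at this
  have hB : ∀ k, k < n → u[k]? = some (tm (i + n + k)) := by
    intro k hk
    have := hel (n + k) (by omega)
    rw [List.getElem?_append_left (by (try simp only [List.length_append]); omega),
      List.getElem?_append_right (by omega)] at this
    have e : n + k - u.length = k := by omega
    rw [e] at this
    rw [this]
    congr 2
    omega
  have hC : ∀ k, k < n → u[k]? = some (tm (i + 2*n + k)) := by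
    intro k hk
    have := hel (2*n + k) (by omega)
    rw [List.getElem?_append_right (by (try simp only [List.length_append]); omega)] at this
    have e : 2*n + k - (u ++ u).length = k := by (try simp only [List.length_append]); omega
    rw [e] at this
    rw [this]
    congr 2
    omega
  refine tm_no_cube n hn1 i (fun j hj => ?_)
  rcases Nat.lt_or_ge j n with hjn | hjn
  · have h1 := hA j hjn
    have h2 := hB j hjn
    rw [h1] at h2
    exact Option.some.inj h2
  · set k := j - n with hk
    have hkn : k < n := by omega
    have h1 := hB k hkn
    have h2 := hC k hkn
    rw [h1] at h2
    have h3 := Option.some.inj h2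
    have e1 : i + j = i + n + k := by omega
    have e2 : i + n + j = i + 2*n + k := by omega
    rw [e1, e2]
    exact h3
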